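/- arXiv:1903.11028 — 2 statements merged into one kernel-verified Lean document; each statement's English description precedes it below -/
import Mathlib

section
/- Let S be a finitely generated submonoid of ℕ^d that is irreducible. Then S has at most one Frobenius element: if f₁ ∈ F(S) and f₂ ∈ F(S), then f₁ = f₂. -/
open scoped BigOperators

/-- The natural cast of an element of `ℕ^d` into `ℚ^d`. -/
def toQ {d : ℕ} (x : Fin d → ℕ) : Fin d → ℚ := fun i => (x i : ℚ)

/-- The natural cast of an element of `ℕ^d` into `ℤ^d`. -/
def natToZ {d : ℕ} (x : Fin d → ℕ) : Fin d → ℤ := fun i => (x i : ℤ)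

/-- The cone `pos(S)` of a submonoid `S ⊆ ℕ^d`: all nonnegative rational
combinations of elements of `S`, as a subset of `ℚ^d`. -/
def posCone {d : ℕ} (S : AddSubmonoid (Fin d → ℕ)) : Set (Fin d → ℚ) :=
  {q | ∃ (k : ℕ) (c : Fin k → ℚ) (s : Fin k → (Fin d → ℕ)),
    (∀ i, 0 ≤ c i) ∧ (∀ i, s i ∈ S) ∧ q = ∑ i, c i • toQ (s i)}

/-- The gap set `H(S) = (pos(S) \ S) ∩ ℕ^d`. -/
def gaps {d : ℕ} (S : AddSubmonoid (Fin d → ℕ)) : Set (Fin d → ℕ) :=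
  {x | toQ x ∈ posCone S ∧ x ∉ S}

/-- The set of pseudo-Frobenius elements of `S`. -/
def PF {d : ℕ} (S : AddSubmonoid (Fin d → ℕ)) : Set (Fin d → ℕ) :=
  {a | a ∈ gaps S ∧ ∀ s ∈ S, s ≠ 0 → a + s ∈ S}

/-- A term order on `ℕ^d`: a total order compatible with addition for which
`0` is the least element. -/
def IsTermOrder {d : ℕ} (r : (Fin d → ℕ) → (Fin d → ℕ) → Prop) : Prop :=
  (∀ a b, r a b ∨ r b a) ∧ (∀ a b, r a b → r b a → a = b) ∧
    (∀ a b c, r a b → r b c → r a c) ∧ (∀ a, r 0 a) ∧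
    (∀ a b c, r a b → r (a + c) (b + c))

/-- The set of Frobenius elements of `S`: maxima of `H(S)` for some term order. -/
def FrobSet {d : ℕ} (S : AddSubmonoid (Fin d → ℕ)) : Set (Fin d → ℕ) :=
  {f | f ∈ gaps S ∧ ∃ r, IsTermOrder r ∧ ∀ h ∈ gaps S, r h f}

/-- The Apéry set of `S` relative to `b`:
`Ap(S,b) = {a ∈ S : a - b ∈ pos(S) \ S}`, the difference taken in `ℚ^d`. -/
def Apery {d : ℕ} (S : AddSubmonoid (Fin d → ℕ)) (b : Fin d → ℕ) : Set (Fin d → ℕ) :=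
  {a | a ∈ S ∧ (toQ a - toQ b) ∈ posCone S ∧ ¬ ∃ s ∈ S, toQ s = toQ a - toQ b}

/-- The partial order `≼_S`: `x ≼_S y` iff `y - x ∈ S`. -/
def leS {d : ℕ} (S : AddSubmonoid (Fin d → ℕ)) (x y : Fin d → ℕ) : Prop :=
  ∃ s ∈ S, x + s = y

/-- `a` is a `≼_S`-maximal element of `X`. -/
def MaximalIn {d : ℕ} (S : AddSubmonoid (Fin d → ℕ)) (X : Set (Fin d → ℕ))
    (a : Fin d → ℕ) : Prop :=
  a ∈ X ∧ ∀ a' ∈ X, a' ≠ a → ¬ leS S a a'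

/-- `S` is irreducible: it is not the intersection of two submonoids of `ℕ^d`
each properly containing it. -/
def IrreducibleMonoid {d : ℕ} (S : AddSubmonoid (Fin d → ℕ)) : Prop :=
  ¬ ∃ S₁ S₂ : AddSubmonoid (Fin d → ℕ), S < S₁ ∧ S < S₂ ∧
    (S : Set (Fin d → ℕ)) = (S₁ : Set (Fin d → ℕ)) ∩ (S₂ : Set (Fin d → ℕ))

/-- The multiplicity of `S`: componentwise infimum of `S \ {0}`. -/
noncomputable def mult {d : ℕ} (S : AddSubmonoid (Fin d → ℕ)) : Fin d → ℕ :=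
  fun i => sInf {n | ∃ s ∈ S, s ≠ 0 ∧ s i = n}

/-- `S` is a PI-monoid: `S = (a + T) ∪ {0}` for some submonoid `T` of `ℕ^d`
and some `a ∈ T \ {0}`. -/
def IsPIMonoid {d : ℕ} (S : AddSubmonoid (Fin d → ℕ)) : Prop :=
  ∃ (T : AddSubmonoid (Fin d → ℕ)) (a : Fin d → ℕ), a ∈ T ∧ a ≠ 0 ∧
    (S : Set (Fin d → ℕ)) = {x | ∃ t ∈ T, x = a + t} ∪ {0}

/-- `G` is a minimal system of generators of `S`. -/
def IsMinimalGenSet {d : ℕ} (S : AddSubmonoid (Fin d → ℕ)) (G : Set (Fin d → ℕ)) : Prop :=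
  AddSubmonoid.closure G = S ∧ ∀ G' ⊂ G, AddSubmonoid.closure G' ≠ S

lemma toQ_add {d : ℕ} (x y : Fin d → ℕ) : toQ (x + y) = toQ x + toQ y := by
  funext i; simp [toQ]

lemma mem_posCone_of_mem {d : ℕ} {S : AddSubmonoid (Fin d → ℕ)} {s : Fin d → ℕ}
    (hs : s ∈ S) : toQ s ∈ posCone S := by
  refine ⟨1, fun _ => 1, fun _ => s, fun _ => by norm_num, fun _ => hs, by simp⟩

lemma posCone_add {d : ℕ} {S : AddSubmonoid (Fin d → ℕ)} {p q : Fin d → ℚ}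
    (hp : p ∈ posCone S) (hq : q ∈ posCone S) : p + q ∈ posCone S := by
  obtain ⟨k1, c1, s1, h1, h2, h3⟩ := hp
  obtain ⟨k2, c2, s2, g1, g2, g3⟩ := hq
  refine ⟨k1 + k2, Fin.addCases c1 c2, Fin.addCases s1 s2, ?_, ?_, ?_⟩
  · intro i
    refine Fin.addCases (motive := fun i => (0:ℚ) ≤ Fin.addCases c1 c2 i) ?_ ?_ i
    · intro j; simpa using h1 j
    · intro j; simpa using g1 j
  · intro i
    refine Fin.addCases (motive := fun i => Fin.addCases s1 s2 i ∈ S) ?_ ?_ i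
    · intro j; simpa using h2 j
    · intro j; simpa using g2 j
  · rw [Fin.sum_univ_add]
    simp only [Fin.addCases_left, Fin.addCases_right]
    rw [h3, g3]

lemma frob_pf {d : ℕ} {S : AddSubmonoid (Fin d → ℕ)} {f : Fin d → ℕ}
    (hf : f ∈ FrobSet S) : ∀ s ∈ S, s ≠ 0 → f + s ∈ S := by
  obtain ⟨⟨hcone, hns⟩, r, ⟨rtot, ranti, rtrans, rzero, radd⟩, rmax⟩ := hf
  intro s hs hsne
  by_contra hfs
  have hgap : f + s ∈ gaps S := by
    refine ⟨?_, hfs⟩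
    rw [toQ_add]
    exact posCone_add hcone (mem_posCone_of_mem hs)
  have h1 : r (f + s) f := rmax _ hgap
  have h2 : r f (f + s) := by
    have := radd 0 s f (rzero s)
    simpa [add_comm] using this
  have := ranti _ _ h2 h1
  exact hsne (by simpa using this.symm)

lemma frob_two {d : ℕ} {S : AddSubmonoid (Fin d → ℕ)} {f : Fin d → ℕ}
    (hf : f ∈ FrobSet S) : f + f ∈ S := by
  obtain ⟨⟨hcone, hns⟩, r, ⟨rtot, ranti, rtrans, rzero, radd⟩, rmax⟩ := hf
  by_contra hff
  have hgap : f + f ∈ gaps S := ⟨by rw [toQ_add]; exact posCone_add hcone hcone, hff⟩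
  have h1 : r (f + f) f := rmax _ hgap
  have h2 : r f (f + f) := by
    have := radd 0 f f (rzero f)
    simpa [add_comm] using this
  have hf0 : f = 0 := by
    have := ranti _ _ h2 h1
    have : f = 0 := by
      funext i
      have := congrFun this i
      simpa using this.symm
    exact this
  exact hns (hf0 ▸ S.zero_mem)

/-- The extended monoid `S ∪ (f + S)` for a Frobenius element `f`. -/
def extMonoid {d : ℕ} (S : AddSubmonoid (Fin d → ℕ)) (f : Fin d → ℕ)
    (hf : f ∈ FrobSet S) : AddSubmonoid (Fin d → ℕ) where
  carrier := (S : Set (Fin d → ℕ)) ∪ {x | ∃ s ∈ S, x = f + s}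
  zero_mem' := Or.inl S.zero_mem
  add_mem' := by
    rintro x y (hx | ⟨s, hs, rfl⟩) (hy | ⟨t, ht, rfl⟩)
    · exact Or.inl (S.add_mem hx hy)
    · exact Or.inr ⟨t + x, S.add_mem ht hx, by abel⟩
    · exact Or.inr ⟨s + y, S.add_mem hs hy, by abel⟩
    · refine Or.inl ?_
      have : (f + s) + (f + t) = (f + f) + (s + t) := by abel
      rw [this]
      exact S.add_mem (frob_two hf) (S.add_mem hs ht)

/-- A finitely generated irreducible submonoid of `ℕ^d` has at
most one Frobenius element. -/
theorem irreducible_unique_frobenius {d : ℕ} (S : AddSubmonoid (Fin d → ℕ))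
    (hfg : S.FG) (hirr : IrreducibleMonoid S)
    (f₁ f₂ : Fin d → ℕ) (hf₁ : f₁ ∈ FrobSet S) (hf₂ : f₂ ∈ FrobSet S) :
    f₁ = f₂ := by
  by_contra hne
  apply hirr
  refine ⟨extMonoid S f₁ hf₁, extMonoid S f₂ hf₂, ?_, ?_, ?_⟩
  · constructor
    · intro x hx; exact Or.inl hx
    · intro hle
      exact hf₁.1.2 (hle (Or.inr ⟨0, S.zero_mem, by simp⟩))
  · constructor
    · intro x hx; exact Or.inl hx
    · intro hle
      exact hf₂.1.2 (hle (Or.inr ⟨0, S.zero_mem, by simp⟩))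
  · ext x
    constructor
    · intro hx; exact ⟨Or.inl hx, Or.inl hx⟩
    · rintro ⟨(h1 | ⟨s, hs, rfl⟩), h2⟩
      · exact h1
      rcases h2 with h2 | ⟨t, ht, heq⟩
      · exact h2
      by_cases hs0 : s = 0
      · subst hs0
        by_cases ht0 : t = 0
        · subst ht0
          exact absurd (by simpa using heq) hne
        · rw [heq]
          exact frob_pf hf₂ t ht ht0
      · exact frob_pf hf₁ s hs hs0
end

section
/- Let S be a C-semigroup (a finitely generated submonoid of ℕ^d with H(S) finite) and suppose there exists f ∈ H(S) such that either PF(S) = {f}, or there exists g ∈ ℕ^d with 2g = f and PF(S) = {f, g}. Then S is C-irreducible: whenever S = S₁ ∩ S₂ for finitely generated submonoids S₁, S₂ of ℕ^d with pos(S₁) = pos(S₂) = pos(S), S ⊆ S₁ and S ⊆ S₂, one has S = S₁ or S = S₂. -/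
open scoped BigOperators

lemma toQ_mem_posCone {d : ℕ} {S : AddSubmonoid (Fin d → ℕ)} {x : Fin d → ℕ}
    (hx : x ∈ S) : toQ x ∈ posCone S := by
  refine ⟨1, fun _ => 1, fun _ => x, fun _ => zero_le_one, fun _ => hx, ?_⟩
  simp

lemma exists_pf_mem {d : ℕ} (S S₁ : AddSubmonoid (Fin d → ℕ))
    (hfin : (gaps S).Finite) (hpos : posCone S₁ = posCone S)
    (hle : S ≤ S₁) (hne : S ≠ S₁) : ∃ x ∈ PF S, x ∈ S₁ := by
  have hsub : ((S₁ : Set (Fin d → ℕ)) \ (S : Set (Fin d → ℕ))) ⊆ gaps S := by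
    rintro x ⟨hx1, hx2⟩
    exact ⟨hpos ▸ toQ_mem_posCone hx1, hx2⟩
  obtain ⟨x0, hx0, hx0'⟩ := SetLike.exists_of_lt (lt_of_le_of_ne hle hne)
  obtain ⟨a, ha, hamax⟩ := Set.Finite.exists_maximalFor (fun x => ∑ i, x i)
    _ (hfin.subset hsub) ⟨x0, hx0, hx0'⟩
  refine ⟨a, ⟨hsub ha, ?_⟩, ha.1⟩
  intro s hs hs0
  by_contra hns
  have hmem : a + s ∈ ((S₁ : Set (Fin d → ℕ)) \ (S : Set (Fin d → ℕ))) :=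
    ⟨S₁.add_mem ha.1 (hle hs), hns⟩
  have hle' : (∑ i, a i) ≤ ∑ i, (a + s) i := by
    apply Finset.sum_le_sum
    intro i _
    simp [Pi.add_apply]
  have heq := le_antisymm hle' (hamax hmem hle')
  have hsum : (∑ i, s i) = 0 := by
    have : (∑ i, a i) + (∑ i, s i) = ∑ i, a i := by
      rw [← Finset.sum_add_distrib]; exact heq.symm
    omega
  exact hs0 (funext fun i => by
    have := (Finset.sum_eq_zero_iff.mp hsum) i (Finset.mem_univ i)
    simpa using this)

/-- A C-semigroup `S` with `PF(S) = {f}` or `PF(S) = {f, f/2}`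
for some `f ∈ H(S)` is C-irreducible. -/
theorem c_irreducible_of_pf {d : ℕ} (S : AddSubmonoid (Fin d → ℕ)) (hfg : S.FG)
    (hfin : (gaps S).Finite) (f : Fin d → ℕ) (hfH : f ∈ gaps S)
    (hpf : PF S = {f} ∨ ∃ g : Fin d → ℕ, g + g = f ∧ PF S = {f, g}) :
    ∀ S₁ S₂ : AddSubmonoid (Fin d → ℕ), S₁.FG → S₂.FG →
      posCone S₁ = posCone S → posCone S₂ = posCone S →
      S ≤ S₁ → S ≤ S₂ →
      (S : Set (Fin d → ℕ)) = (S₁ : Set (Fin d → ℕ)) ∩ (S₂ : Set (Fin d → ℕ)) →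
      S = S₁ ∨ S = S₂ := by
  intro S₁ S₂ _ _ hpos1 hpos2 hle1 hle2 hinter
  by_contra hcon
  push_neg at hcon
  obtain ⟨hne1, hne2⟩ := hcon
  obtain ⟨x₁, hx₁pf, hx₁⟩ := exists_pf_mem S S₁ hfin hpos1 hle1 hne1
  obtain ⟨x₂, hx₂pf, hx₂⟩ := exists_pf_mem S S₂ hfin hpos2 hle2 hne2
  have hfS : f ∉ S := hfH.2
  have key : ∀ x (hS₁ : AddSubmonoid (Fin d → ℕ)), x ∈ hS₁ →
      (PF S = {f} ∨ ∃ g : Fin d → ℕ, g + g = f ∧ PF S = {f, g}) →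
      x ∈ PF S → f ∈ hS₁ := by
    intro x T hxT hp hxpf
    rcases hp with h | ⟨g, hg, h⟩
    · rw [h] at hxpf; rwa [← hxpf]
    · rw [h] at hxpf
      rcases hxpf with rfl | rfl
      · exact hxT
      · rw [← hg]; exact T.add_mem hxT hxT
  have hf1 : f ∈ S₁ := key x₁ S₁ hx₁ hpf hx₁pf
  have hf2 : f ∈ S₂ := key x₂ S₂ hx₂ hpf hx₂pf
  have : f ∈ (S : Set (Fin d → ℕ)) := by rw [hinter]; exact ⟨hf1, hf2⟩
  exact hfS this
end
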